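/- Let 𝓔, 𝓕, 𝓖, 𝓗 be vector spaces over a field k and let A : 𝓔 → 𝓕, B : 𝓖 → 𝓗, P : 𝓖 → 𝓔, Q : 𝓔 → 𝓖, R : 𝓗 → 𝓕, S : 𝓕 → 𝓗, T : 𝓕 → 𝓔 be linear maps. If A is a silvern transmutation of B by philosopher's stone (P,Q,R,S,T), then ker A = P(ker B) and ker A ∩ ker Q = 0. -/
import Mathlib


/-- If `A` is a silvern transmutation of `B` by philosopher's stone `(P,Q,R,S,T)`
(post-catalysis `A∘P = R∘B`, pre-catalysis `B∘Q = S∘A`,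
pre-regeneration `P∘Q + T∘A = id`), then `ker A = P(ker B)` and `ker A ∩ ker Q = 0`. -/
theorem silvern_ker_eq_map_and_disjoint
    {k : Type*} [Field k]
    {E F G H : Type*}
    [AddCommGroup E] [Module k E] [AddCommGroup F] [Module k F]
    [AddCommGroup G] [Module k G] [AddCommGroup H] [Module k H]
    (A : E →ₗ[k] F) (B : G →ₗ[k] H) (P : G →ₗ[k] E) (Q : E →ₗ[k] G)
    (R : H →ₗ[k] F) (S : F →ₗ[k] H) (T : F →ₗ[k] E)
    (hpost : A ∘ₗ P = R ∘ₗ B)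
    (hpre : B ∘ₗ Q = S ∘ₗ A)
    (hreg : P ∘ₗ Q + T ∘ₗ A = LinearMap.id) :
    LinearMap.ker A = Submodule.map P (LinearMap.ker B) ∧
    LinearMap.ker A ⊓ LinearMap.ker Q = ⊥ := by
  have hpost' : ∀ g, A (P g) = R (B g) := fun g => congrFun (congrArg DFunLike.coe hpost) g
  have hpre' : ∀ x, B (Q x) = S (A x) := fun x => congrFun (congrArg DFunLike.coe hpre) x
  have hreg' : ∀ x : E, P (Q x) + T (A x) = x := fun x =>
    congrFun (congrArg DFunLike.coe hreg) x
  constructor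
  · ext x
    simp only [LinearMap.mem_ker, Submodule.mem_map]
    constructor
    · intro hx
      refine ⟨Q x, ?_, ?_⟩
      · rw [hpre', hx, map_zero]
      · have := hreg' x
        rw [hx, map_zero, add_zero] at this
        exact this
    · rintro ⟨g, hg, rfl⟩
      rw [hpost', hg, map_zero]
  · rw [eq_bot_iff]
    rintro x ⟨hA, hQ⟩
    have := hreg' x
    rw [hA, hQ, map_zero, map_zero, add_zero] at this
    simpa using this.symm
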